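/- Let p > 1, 0 ≤ α < 1, and let C₀ ≥ 1, C₁ > 0 and C̃₃ ≥ 0 be constants. Let x ≥ 1 and let g : [x, 2x] → [0,∞) be continuous, satisfying g(x₂) + C₁ ∫_{x₁}^{x₂} t^{−α} g(t) dt ≤ C₀ g(x₁) + C̃₃ x₁^{−p+α} for all x ≤ x₁ < x₂ ≤ 2x. Then g(2x) ≤ (2^α C₀² / C₁) x^{−1+α} g(x) + ((2^α C₀ / C₁) + 1) C̃₃ x^{−p+α}. -/

import Mathlib

open MeasureTheory

/-- Doubling (iteration) step of the decay lemma: a continuous nonnegative function on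
`[x, 2x]` satisfying the two-point integral inequality gains a factor `x ^ (-1 + α)`
over one doubling of the argument. -/
theorem doubling_step (p α : ℝ) (hp : 1 < p) (hα0 : 0 ≤ α) (hα1 : α < 1)
    (C₀ C₁ C₃ : ℝ) (hC₀ : 1 ≤ C₀) (hC₁ : 0 < C₁) (hC₃ : 0 ≤ C₃)
    (x : ℝ) (hx : 1 ≤ x) (g : ℝ → ℝ)
    (hgc : ContinuousOn g (Set.Icc x (2 * x)))
    (hgnn : ∀ t ∈ Set.Icc x (2 * x), 0 ≤ g t)
    (hineq : ∀ x₁ x₂ : ℝ, x ≤ x₁ → x₁ < x₂ → x₂ ≤ 2 * x →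
      g x₂ + C₁ * (∫ t in x₁..x₂, t ^ (-α) * g t) ≤ C₀ * g x₁ + C₃ * x₁ ^ (-p + α)) :
    g (2 * x) ≤ (2 : ℝ) ^ α * C₀ ^ 2 / C₁ * x ^ (-1 + α) * g x
      + ((2 : ℝ) ^ α * C₀ / C₁ + 1) * C₃ * x ^ (-p + α) := by
  have hx0 : (0:ℝ) < x := lt_of_lt_of_le one_pos hx
  have h2x : x < 2 * x := by linarith
  obtain ⟨ξ, hξ, hmin⟩ :=
    isCompact_Icc.exists_isMinOn ⟨x, Set.left_mem_Icc.mpr h2x.le⟩ hgc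
  have hξx : x ≤ ξ := hξ.1
  have hξ2x : ξ ≤ 2 * x := hξ.2
  have hξ0 : 0 < ξ := lt_of_lt_of_le hx0 hξx
  have hgξ0 : 0 ≤ g ξ := hgnn ξ hξ
  have hgx0 : 0 ≤ g x := hgnn x ⟨le_refl x, h2x.le⟩
  have hg2x0 : 0 ≤ g (2 * x) := hgnn _ ⟨h2x.le, le_refl _⟩
  have hv0 : 0 ≤ x ^ (-p + α) := Real.rpow_nonneg hx0.le _
  have hu0 : 0 < x ^ (-1 + α) := Real.rpow_pos_of_pos hx0 _
  have h2a0 : 0 < (2:ℝ) ^ α := Real.rpow_pos_of_pos two_pos _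
  have hcont : ContinuousOn (fun t => t ^ (-α) * g t) (Set.Icc x (2*x)) := by
    apply ContinuousOn.mul _ hgc
    exact ContinuousOn.rpow_const continuousOn_id
      (fun t ht => Or.inl (ne_of_gt (lt_of_lt_of_le hx0 ht.1)))
  have hInt : IntervalIntegrable (fun t => t ^ (-α) * g t) volume x (2*x) := by
    apply ContinuousOn.intervalIntegrable
    rwa [Set.uIcc_of_le h2x.le]
  -- lower bound for the integral using the minimum point ξ
  have hlb : x * ((2*x) ^ (-α) * g ξ) ≤ ∫ t in x..(2*x), t ^ (-α) * g t := by
    have hmono : ∀ t ∈ Set.Icc x (2*x),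
        (2*x) ^ (-α) * g ξ ≤ t ^ (-α) * g t := by
      intro t ht
      have h1 : (2*x:ℝ) ^ (-α) ≤ t ^ (-α) :=
        Real.rpow_le_rpow_of_nonpos (lt_of_lt_of_le hx0 ht.1) ht.2 (by linarith)
      exact mul_le_mul h1 (hmin ht) hgξ0 (Real.rpow_nonneg (by linarith [ht.1]) _)
    have := intervalIntegral.integral_mono_on h2x.le
      (intervalIntegrable_const (c := (2*x:ℝ) ^ (-α) * g ξ)) hInt hmono
    rw [intervalIntegral.integral_const] at this
    have h2 : (2*x - x) = x := by ring
    rw [h2] at this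
    simpa using this
  -- first application of the hypothesis: from x to 2x
  have key1 : C₁ * (x * ((2*x) ^ (-α) * g ξ)) ≤ C₀ * g x + C₃ * x ^ (-p + α) := by
    have h := hineq x (2*x) le_rfl h2x le_rfl
    have h2 : C₁ * (x * ((2*x) ^ (-α) * g ξ)) ≤ C₁ * ∫ t in x..(2*x), t ^ (-α) * g t :=
      mul_le_mul_of_nonneg_left hlb hC₁.le
    linarith
  -- second application (or trivial bound if ξ = 2x)
  have key2 : g (2*x) ≤ C₀ * g ξ + C₃ * x ^ (-p + α) := by
    rcases eq_or_lt_of_le hξ2x with heq | hlt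
    · have : g (2*x) = g ξ := by rw [heq]
      nlinarith [mul_nonneg hC₃ hv0]
    · have h := hineq ξ (2*x) hξx hlt le_rfl
      have hintnn : 0 ≤ ∫ t in ξ..(2*x), t ^ (-α) * g t := by
        apply intervalIntegral.integral_nonneg hlt.le
        intro t ht
        exact mul_nonneg (Real.rpow_nonneg (by linarith [ht.1]) _)
          (hgnn t ⟨le_trans hξx ht.1, ht.2⟩)
      have hξp : ξ ^ (-p + α) ≤ x ^ (-p + α) :=
        Real.rpow_le_rpow_of_nonpos hx0 hξx (by linarith)
      nlinarith [mul_le_mul_of_nonneg_left hξp hC₃]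
  -- the key algebraic identity
  have hprod : (2:ℝ) ^ α * x ^ (-1+α) * (x * (2*x) ^ (-α)) = 1 := by
    rw [Real.mul_rpow (by norm_num) hx0.le]
    have hxx : (x : ℝ) = x ^ (1:ℝ) := (Real.rpow_one x).symm
    calc (2:ℝ) ^ α * x ^ (-1+α) * (x * ((2:ℝ) ^ (-α) * x ^ (-α)))
        = ((2:ℝ) ^ α * (2:ℝ) ^ (-α)) * (x ^ (-1+α) * x ^ (1:ℝ) * x ^ (-α)) := by
          rw [← hxx]; ring
      _ = 1 := by
          rw [← Real.rpow_add two_pos, ← Real.rpow_add hx0, ← Real.rpow_add hx0]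
          norm_num
  -- bound on g ξ
  have hgξ : g ξ ≤ (2:ℝ) ^ α * x ^ (-1+α) / C₁ * (C₀ * g x + C₃ * x ^ (-p+α)) := by
    have hc : 0 ≤ (2:ℝ) ^ α * x ^ (-1+α) / C₁ := by positivity
    have h := mul_le_mul_of_nonneg_left key1 hc
    have heq : (2:ℝ) ^ α * x ^ (-1+α) / C₁ * (C₁ * (x * ((2*x) ^ (-α) * g ξ))) = g ξ := by
      have hre : (2:ℝ) ^ α * x ^ (-1+α) / C₁ * (C₁ * (x * ((2*x) ^ (-α) * g ξ)))
          = ((2:ℝ) ^ α * x ^ (-1+α) * (x * (2*x) ^ (-α))) * g ξ * (C₁ / C₁) := by ring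
      rw [hre, hprod, div_self hC₁.ne']
      ring
    linarith [heq ▸ h]
  have hu1 : x ^ (-1+α) ≤ 1 :=
    Real.rpow_le_one_of_one_le_of_nonpos hx (by linarith)
  -- final arithmetic
  have hC₀0 : (0:ℝ) ≤ C₀ := by linarith
  calc g (2*x) ≤ C₀ * g ξ + C₃ * x ^ (-p + α) := key2
    _ ≤ C₀ * ((2:ℝ) ^ α * x ^ (-1+α) / C₁ * (C₀ * g x + C₃ * x ^ (-p+α)))
          + C₃ * x ^ (-p + α) := by
        have := mul_le_mul_of_nonneg_left hgξ hC₀0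
        linarith
    _ = (2:ℝ) ^ α * C₀ ^ 2 / C₁ * x ^ (-1+α) * g x
          + (2:ℝ) ^ α * C₀ / C₁ * (x ^ (-1+α) * (C₃ * x ^ (-p+α)))
          + C₃ * x ^ (-p + α) := by ring
    _ ≤ (2:ℝ) ^ α * C₀ ^ 2 / C₁ * x ^ (-1+α) * g x
          + (2:ℝ) ^ α * C₀ / C₁ * (1 * (C₃ * x ^ (-p+α)))
          + C₃ * x ^ (-p + α) := by
        gcongr
    _ = (2 : ℝ) ^ α * C₀ ^ 2 / C₁ * x ^ (-1 + α) * g x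
          + ((2 : ℝ) ^ α * C₀ / C₁ + 1) * C₃ * x ^ (-p + α) := by ring
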